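/- Let Y be a nondegenerate random variable and X a random vector with ν(Y,X) = 0, where ν(Y,X) = ∫ Var(E[1{Y>t}|X])/Var(1{Y>t}) dμ̃(t). Then Y and X are independent. -/

import Mathlib

open MeasureTheory ProbabilityTheory Classical

noncomputable section

/-- The indicator of the event `{Y > t}`. -/
def indGT {Ω : Type*} (Y : Ω → ℝ) (t : ℝ) : Ω → ℝ := fun ω => if Y ω > t then 1 else 0

/-- The (topological) support of a measure on `ℝ`: points all of whose neighbourhoods
have positive measure. -/
def msupport (ρ : Measure ℝ) : Set ℝ :=
  {x | ∀ ε > (0 : ℝ), ρ (Set.Ioo (x - ε) (x + ε)) ≠ 0}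

/-- `S̃`: the support with its maximum removed, if the support attains a maximum. -/
def tildeSet (ρ : Measure ℝ) : Set ℝ :=
  if h : ∃ m, IsGreatest (msupport ρ) m then msupport ρ \ {h.choose} else msupport ρ

/-- `μ̃`: the law `ρ` restricted to `S̃` and renormalized. -/
def tildeMeasure (ρ : Measure ℝ) : Measure ℝ :=
  (ρ (tildeSet ρ))⁻¹ • ρ.restrict (tildeSet ρ)

/-- The dependence measure
`ν(Y, X) = ∫ Var(E[1{Y > t} | X]) / Var(1{Y > t}) dμ̃(t)`,
where the integrand is defined to be `1` whenever `Var(1{Y > t}) = 0`. -/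
def nu {Ω : Type*} [MeasurableSpace Ω] (μ : Measure Ω) (Y : Ω → ℝ)
    {E : Type*} [MeasurableSpace E] (X : Ω → E) : ℝ :=
  ∫ t, (if variance (indGT Y t) μ = 0 then 1
        else variance (μ[indGT Y t | MeasurableSpace.comap X inferInstance]) μ
              / variance (indGT Y t) μ)
    ∂ tildeMeasure (Measure.map Y μ)

end

open Set

section SupportLemmas

lemma isClosed_msupport (ρ : Measure ℝ) : IsClosed (msupport ρ) := by
  rw [← isOpen_compl_iff, isOpen_iff_forall_mem_open]
  intro x hx
  simp only [msupport, mem_compl_iff, mem_setOf_eq, not_forall, not_ne_iff] at hx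
  obtain ⟨ε, hε, h0⟩ := hx
  refine ⟨Ioo (x - ε) (x + ε), fun y hy => ?_, isOpen_Ioo, by constructor <;> simp <;> linarith⟩
  simp only [msupport, mem_compl_iff, mem_setOf_eq, not_forall, not_ne_iff]
  refine ⟨min (y - (x - ε)) (x + ε - y), ⟨?_, ?_⟩⟩
  · obtain ⟨h1, h2⟩ := hy; simp only [lt_min_iff]; constructor <;> linarith
  · refine measure_mono_null (Ioo_subset_Ioo ?_ ?_) h0
    · have := min_le_left (y - (x - ε)) (x + ε - y); linarith
    · have := min_le_right (y - (x - ε)) (x + ε - y); linarith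

lemma measure_compl_msupport (ρ : Measure ℝ) : ρ (msupport ρ)ᶜ = 0 := by
  have hsub : (msupport ρ)ᶜ ⊆
      ⋃ (p : ℚ × ℚ) (_ : ρ (Ioo (p.1 : ℝ) (p.2 : ℝ)) = 0), Ioo (p.1 : ℝ) (p.2 : ℝ) := by
    intro x hx
    simp only [msupport, mem_compl_iff, mem_setOf_eq, not_forall, not_ne_iff] at hx
    obtain ⟨ε, hε, h0⟩ := hx
    obtain ⟨a, ha1, ha2⟩ := exists_rat_btwn (show x - ε < x by linarith)
    obtain ⟨b, hb1, hb2⟩ := exists_rat_btwn (show x < x + ε by linarith)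
    refine mem_iUnion.mpr ⟨(a, b), mem_iUnion.mpr ⟨?_, ⟨ha2, hb1⟩⟩⟩
    exact measure_mono_null (Ioo_subset_Ioo ha1.le hb2.le) h0
  refine measure_mono_null hsub (measure_iUnion_null fun p => ?_)
  by_cases h : ρ (Ioo (p.1 : ℝ) (p.2 : ℝ)) = 0
  · simpa [h] using h
  · simp [h]

lemma exists_mem_inter {α : Type*} [MeasurableSpace α] {μ : Measure α} {s t : Set α}
    (ht : μ tᶜ = 0) (h : μ s ≠ 0) : (s ∩ t).Nonempty := by
  apply nonempty_of_measure_ne_zero (μ := μ)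
  intro h0
  refine h (measure_mono_null (fun x hx => ?_) (measure_union_null h0 ht))
  by_cases hxt : x ∈ t
  exacts [Or.inl ⟨hx, hxt⟩, Or.inr hxt]

lemma measure_Ioi_greatest {ρ : Measure ℝ} {m : ℝ} (hm : IsGreatest (msupport ρ) m) :
    ρ (Ioi m) = 0 := by
  refine measure_mono_null (fun x hx => ?_) (measure_compl_msupport ρ)
  exact fun hxS => absurd (hm.2 hxS) (not_le.mpr hx)

lemma mem_msupport_of_atom {ρ : Measure ℝ} {x : ℝ} (hx : ρ {x} ≠ 0) : x ∈ msupport ρ := by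
  intro ε hε h0
  refine hx (measure_mono_null (singleton_subset_iff.mpr ?_) h0)
  constructor <;> simp <;> linarith

lemma measurableSet_tildeSet (ρ : Measure ℝ) : MeasurableSet (tildeSet ρ) := by
  unfold tildeSet
  split_ifs
  · exact (isClosed_msupport ρ).measurableSet.diff (measurableSet_singleton _)
  · exact (isClosed_msupport ρ).measurableSet

lemma exists_D_point {ρ : Measure ℝ} {D : Set ℝ} (hD : ρ (tildeSet ρ \ D) = 0)
    {a b : ℝ} (h : ρ (Ioo a b) ≠ 0)
    (hm : ∀ h' : ∃ m, IsGreatest (msupport ρ) m, h'.choose ∉ Ioo a b) :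
    ∃ x ∈ D, x ∈ Ioo a b := by
  have hsub : Ioo a b ⊆ (Ioo a b ∩ (tildeSet ρ ∩ D)) ∪ ((msupport ρ)ᶜ ∪ (tildeSet ρ \ D)) := by
    intro x hx
    by_cases h1 : x ∈ msupport ρ
    · have hx2 : x ∈ tildeSet ρ := by
        unfold tildeSet
        split_ifs with h'
        · exact ⟨h1, fun hxm => (hm h') (mem_singleton_iff.mp hxm ▸ hx)⟩
        · exact h1
      by_cases h2 : x ∈ D
      · exact Or.inl ⟨hx, hx2, h2⟩
      · exact Or.inr (Or.inr ⟨hx2, h2⟩)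
    · exact Or.inr (Or.inl h1)
  have hnull : ρ ((msupport ρ)ᶜ ∪ (tildeSet ρ \ D)) = 0 :=
    measure_union_null (measure_compl_msupport ρ) hD
  have hne : ρ (Ioo a b ∩ (tildeSet ρ ∩ D)) ≠ 0 :=
    fun h0 => h (measure_mono_null hsub (measure_union_null h0 hnull))
  obtain ⟨x, hx1, _, hx3⟩ := nonempty_of_measure_ne_zero hne
  exact ⟨x, hx3, hx1⟩

lemma atom_mem_D {ρ : Measure ℝ} {D : Set ℝ} (hD : ρ (tildeSet ρ \ D) = 0)
    {x : ℝ} (hx : ρ {x} ≠ 0)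
    (hm : ∀ h' : ∃ m, IsGreatest (msupport ρ) m, x ≠ h'.choose) : x ∈ D := by
  have hxS : x ∈ msupport ρ := mem_msupport_of_atom hx
  have hxSt : x ∈ tildeSet ρ := by
    unfold tildeSet
    split_ifs with h'
    · exact ⟨hxS, fun hxm => (hm h') (mem_singleton_iff.mp hxm)⟩
    · exact hxS
  by_contra h2
  exact hx (measure_mono_null (fun y hy => (mem_singleton_iff.mp hy) ▸ ⟨hxSt, h2⟩) hD)

end SupportLemmas

section KeyLemma

open Set

lemma key_extension (ρ κ₁ κ₂ : Measure ℝ) [IsProbabilityMeasure ρ]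
    [IsFiniteMeasure κ₁] [IsFiniteMeasure κ₂]
    (h1 : κ₁ ≤ ρ) (h2 : κ₂ ≤ ρ) (huniv : κ₁ Set.univ = κ₂ Set.univ)
    (hae : ∀ᵐ t ∂ρ.restrict (tildeSet ρ), κ₁ (Set.Ioi t) = κ₂ (Set.Ioi t)) :
    ∀ t, κ₁ (Set.Ioi t) = κ₂ (Set.Ioi t) := by
  classical
  set D := {s : ℝ | κ₁ (Ioi s) = κ₂ (Ioi s)} with hDdef
  have hk1 : ∀ s, κ₁ s ≤ ρ s := Measure.le_iff'.mp h1
  have hk2 : ∀ s, κ₂ s ≤ ρ s := Measure.le_iff'.mp h2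
  have hnull : ∀ s, ρ s = 0 → κ₁ s = 0 ∧ κ₂ s = 0 := fun s hs =>
    ⟨le_antisymm ((hk1 s).trans hs.le) zero_le,
     le_antisymm ((hk2 s).trans hs.le) zero_le⟩
  have hD : ρ (tildeSet ρ \ D) = 0 := by
    have h := hae
    rw [ae_iff, Measure.restrict_apply' (measurableSet_tildeSet ρ)] at h
    rw [diff_eq, inter_comm]
    exact h
  have hIic : ∀ s, κ₁ (Ioi s) = κ₂ (Ioi s) → κ₁ (Iic s) = κ₂ (Iic s) := by
    intro s h
    have e : Iic s = (Ioi s)ᶜ := compl_Ioi.symm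
    rw [e, measure_compl measurableSet_Ioi (measure_ne_top _ _),
      measure_compl measurableSet_Ioi (measure_ne_top _ _), huniv, h]
  have hDIoi : ∀ s, s ∈ D ∨ ρ (Ioi s) = 0 → κ₁ (Ioi s) = κ₂ (Ioi s) := by
    intro s hs
    rcases hs with h | h
    · exact h
    · rw [(hnull _ h).1, (hnull _ h).2]
  intro t
  by_cases h0 : ρ (Ioi t) = 0
  · exact (hnull _ h0).1.trans (hnull _ h0).2.symm
  set Eset := {s : ℝ | t < s ∧ (s ∈ D ∨ ρ (Ioi s) = 0)} with hEdef
  have hEne : Eset.Nonempty := by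
    by_cases hgr : ∃ m, IsGreatest (msupport ρ) m
    · refine ⟨hgr.choose, ?_, Or.inr (measure_Ioi_greatest hgr.choose_spec)⟩
      by_contra hle
      push_neg at hle
      exact h0 (measure_mono_null (Ioi_subset_Ioi hle) (measure_Ioi_greatest hgr.choose_spec))
    · obtain ⟨x, hxt, hxS⟩ := exists_mem_inter (μ := ρ) (measure_compl_msupport ρ) h0
      have hxt' : t < x := hxt
      have hx1 : ρ (Ioo (x - (x - t)) (x + 1)) ≠ 0 := by
        have h3 := hxS (min (x - t) 1) (lt_min (by linarith) one_pos)
        intro hcon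
        refine h3 (measure_mono_null (Ioo_subset_Ioo ?_ ?_) hcon)
        · have := min_le_left (x - t) 1; linarith
        · have := min_le_right (x - t) 1; linarith
      obtain ⟨y, hyD, hy⟩ := exists_D_point hD hx1 (fun h' => absurd h' hgr)
      refine ⟨y, ?_, Or.inl hyD⟩
      have : x - (x - t) = t := by ring
      rw [this] at hy
      exact hy.1
  have hEbdd : BddBelow Eset := ⟨t, fun s hs => hs.1.le⟩
  set r := sInf Eset with hrdef
  have hrt : t ≤ r := le_csInf hEne (fun s hs => hs.1.le)
  have hrub : ∀ s ∈ Eset, r ≤ s := fun s hs => csInf_le hEbdd hs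
  have hIoo : ρ (Ioo t r) = 0 := by
    by_contra hne
    have hm' : ∀ h' : ∃ m, IsGreatest (msupport ρ) m, h'.choose ∉ Ioo t r := by
      intro h' hmem
      have : h'.choose ∈ Eset := ⟨hmem.1, Or.inr (measure_Ioi_greatest h'.choose_spec)⟩
      exact absurd (hrub _ this) (not_le.mpr hmem.2)
    obtain ⟨x, hxD, hx⟩ := exists_D_point hD hne hm'
    exact absurd (hrub x ⟨hx.1, Or.inl hxD⟩) (not_le.mpr hx.2)
  have hrEq : κ₁ (Ioi r) = κ₂ (Ioi r) := by
    by_cases hrE : r ∈ D ∨ ρ (Ioi r) = 0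
    · exact hDIoi r hrE
    · have hseq : ∀ n : ℕ, ∃ s ∈ Eset, s < r + 1 / (n + 1) := by
        intro n
        refine exists_lt_of_csInf_lt hEne ?_
        have : (0:ℝ) < 1 / (n + 1) := by positivity
        linarith
      choose u hu1 hu2 using hseq
      have hur : ∀ n, r < u n := by
        intro n
        rcases lt_or_eq_of_le (hrub _ (hu1 n)) with h | h
        · exact h
        · exact absurd (h ▸ (hu1 n).2) hrE
      have hUnion : Ioi r = ⋃ n, Ioi (u n) := by
        ext x
        simp only [mem_Ioi, mem_iUnion]
        constructor
        · intro hx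
          obtain ⟨n, hn⟩ := exists_nat_one_div_lt (show (0:ℝ) < x - r by linarith)
          exact ⟨n, by have := hu2 n; linarith⟩
        · rintro ⟨n, hn⟩
          exact lt_trans (hur n) hn
      have hdir : Directed (· ⊆ ·) (fun n => Ioi (u n)) := by
        intro i j
        rcases le_total (u i) (u j) with h | h
        exacts [⟨i, subset_rfl, Ioi_subset_Ioi h⟩, ⟨j, Ioi_subset_Ioi h, subset_rfl⟩]
      have hEq : ∀ n, κ₁ (Ioi (u n)) = κ₂ (Ioi (u n)) := fun n => hDIoi _ (hu1 n).2
      rw [hUnion, hdir.measure_iUnion, hdir.measure_iUnion]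
      exact iSup_congr hEq
  rcases eq_or_lt_of_le hrt with heq | hlt
  · rw [heq]; exact hrEq
  have hsplit : ∀ κ : Measure ℝ, (∀ s, κ s ≤ ρ s) → κ (Ioi t) = κ {r} + κ (Ioi r) := by
    intro κ hκ
    have e1 : Ioi t = Ioo t r ∪ Ici r := (Ioo_union_Ici_eq_Ioi hlt).symm
    have e2 : κ (Ioo t r ∪ Ici r) = κ (Ici r) := by
      refine le_antisymm ?_ (measure_mono subset_union_right)
      calc κ (Ioo t r ∪ Ici r) ≤ κ (Ioo t r) + κ (Ici r) := measure_union_le _ _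
      _ = κ (Ici r) := by
          rw [le_antisymm ((hκ _).trans hIoo.le) zero_le, zero_add]
    have e3 : Ici r = {r} ∪ Ioi r := by
      ext x
      simp only [mem_Ici, mem_union, mem_singleton_iff, mem_Ioi]
      constructor
      · intro h; rcases eq_or_lt_of_le h with h | h
        exacts [Or.inl h.symm, Or.inr h]
      · rintro (rfl | h) <;> [exact le_refl _; exact h.le]
    rw [e1, e2, e3, measure_union ?_ measurableSet_Ioi]
    simp only [disjoint_singleton_left, mem_Ioi, lt_irrefl, not_false_iff]
  suffices hsing : κ₁ {r} = κ₂ {r} by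
    rw [hsplit κ₁ hk1, hsplit κ₂ hk2, hsing, hrEq]
  by_cases hatom : ρ {r} = 0
  · rw [(hnull _ hatom).1, (hnull _ hatom).2]
  have hrS : r ∈ msupport ρ := mem_msupport_of_atom hatom
  have hrm : ∀ h' : ∃ m, IsGreatest (msupport ρ) m, r ≤ h'.choose :=
    fun h' => h'.choose_spec.2 hrS
  have hIicr : κ₁ (Iic r) = κ₂ (Iic r) := hIic r hrEq
  suffices hIio : κ₁ (Iio r) = κ₂ (Iio r) by
    have e : ∀ κ : Measure ℝ, κ (Iio r) + κ {r} = κ (Iic r) := by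
      intro κ
      rw [← measure_union ?_ (measurableSet_singleton r)]
      · congr 1
        ext x
        simp only [mem_union, mem_Iio, mem_singleton_iff, mem_Iic]
        constructor
        · rintro (h | rfl) <;> [exact h.le; exact le_refl _]
        · intro h; rcases lt_or_eq_of_le h with h | h
          exacts [Or.inl h, Or.inr h]
      · simp only [disjoint_singleton_right, mem_Iio, lt_irrefl, not_false_iff]
    have h5 := (e κ₁).trans hIicr
    rw [← e κ₂, hIio] at h5
    exact (ENNReal.add_right_inj (measure_ne_top κ₂ _)).mp h5
  set E2 := {s : ℝ | s < r ∧ (s ∈ D ∨ ρ (Ioi s) = 0 ∨ ρ (Iic s) = 0)} with hE2def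
  have hIicE : ∀ s, s ∈ D ∨ ρ (Ioi s) = 0 ∨ ρ (Iic s) = 0 → κ₁ (Iic s) = κ₂ (Iic s) := by
    intro s hs
    rcases hs with h | h | h
    · exact hIic s h
    · exact hIic s (hDIoi s (Or.inr h))
    · rw [(hnull _ h).1, (hnull _ h).2]
  have hE2ne : E2.Nonempty := by
    by_cases hlow : ∃ s, s < r ∧ ρ (Iic s) = 0
    · obtain ⟨s, hs1, hs2⟩ := hlow
      exact ⟨s, hs1, Or.inr (Or.inr hs2)⟩
    · push_neg at hlow
      have h3 : ρ (Iic (r - 1)) ≠ 0 := hlow _ (by linarith)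
      obtain ⟨x, hx1, hx2⟩ := exists_mem_inter (μ := ρ) (measure_compl_msupport ρ) h3
      have hxr : x < r := by have := mem_Iic.mp hx1; linarith
      have hIoo2 : ρ (Ioo (x - 1) r) ≠ 0 := by
        have h4 := hx2 (min 1 (r - x)) (lt_min one_pos (by linarith))
        intro hcon
        refine h4 (measure_mono_null (Ioo_subset_Ioo ?_ ?_) hcon)
        · have := min_le_left (1:ℝ) (r - x); linarith
        · have := min_le_right (1:ℝ) (r - x); linarith
      have hm' : ∀ h' : ∃ m, IsGreatest (msupport ρ) m, h'.choose ∉ Ioo (x - 1) r :=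
        fun h' hmem => absurd (hrm h') (not_le.mpr hmem.2)
      obtain ⟨y, hyD, hy⟩ := exists_D_point hD hIoo2 hm'
      exact ⟨y, hy.2, Or.inl hyD⟩
  have hE2bdd : BddAbove E2 := ⟨r, fun s hs => hs.1.le⟩
  set r' := sSup E2 with hr'def
  have hr'le : r' ≤ r := csSup_le hE2ne (fun s hs => hs.1.le)
  have hr'lb : ∀ s ∈ E2, s ≤ r' := fun s hs => le_csSup hE2bdd hs
  have hIoo' : ρ (Ioo r' r) = 0 := by
    by_contra hne
    have hm' : ∀ h' : ∃ m, IsGreatest (msupport ρ) m, h'.choose ∉ Ioo r' r :=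
      fun h' hmem => absurd (hrm h') (not_le.mpr hmem.2)
    obtain ⟨y, hyD, hy⟩ := exists_D_point hD hne hm'
    exact absurd (hr'lb y ⟨hy.2, Or.inl hyD⟩) (not_le.mpr hy.1)
  have hIor' : r' ∉ E2 → κ₁ (Iio r') = κ₂ (Iio r') := by
    intro hr'E
    have hseq : ∀ n : ℕ, ∃ s ∈ E2, r' - 1 / (n + 1) < s := by
      intro n
      refine exists_lt_of_lt_csSup hE2ne ?_
      have : (0:ℝ) < 1 / (n + 1) := by positivity
      linarith
    choose u hu1 hu2 using hseq
    have hur : ∀ n, u n < r' := by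
      intro n
      rcases lt_or_eq_of_le (hr'lb _ (hu1 n)) with h | h
      · exact h
      · exact absurd (h ▸ (hu1 n)) hr'E
    have hUnion : Iio r' = ⋃ n, Iic (u n) := by
      ext x
      simp only [mem_Iio, mem_iUnion, mem_Iic]
      constructor
      · intro hx
        obtain ⟨n, hn⟩ := exists_nat_one_div_lt (show (0:ℝ) < r' - x by linarith)
        exact ⟨n, by have := hu2 n; linarith⟩
      · rintro ⟨n, hn⟩
        exact lt_of_le_of_lt hn (hur n)
    have hdir : Directed (· ⊆ ·) (fun n => Iic (u n)) := by
      intro i j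
      rcases le_total (u i) (u j) with h | h
      exacts [⟨j, Iic_subset_Iic.mpr h, subset_rfl⟩, ⟨i, subset_rfl, Iic_subset_Iic.mpr h⟩]
    have hEq : ∀ n, κ₁ (Iic (u n)) = κ₂ (Iic (u n)) := fun n => hIicE _ (hu1 n).2
    rw [hUnion, hdir.measure_iUnion, hdir.measure_iUnion]
    exact iSup_congr hEq
  have hsplit2 : r' < r → κ₁ (Iic r') = κ₂ (Iic r') → κ₁ (Iio r) = κ₂ (Iio r) := by
    intro hlt' hIicr'
    have e : ∀ κ : Measure ℝ, (∀ s, κ s ≤ ρ s) → κ (Iio r) = κ (Iic r') := by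
      intro κ hκ
      have e1 : Iio r = Iic r' ∪ Ioo r' r := by
        ext x
        simp only [mem_Iio, mem_union, mem_Iic, mem_Ioo]
        constructor
        · intro hx
          rcases le_or_gt x r' with h | h
          exacts [Or.inl h, Or.inr ⟨h, hx⟩]
        · rintro (h | ⟨_, h⟩)
          exacts [lt_of_le_of_lt h hlt', h]
      rw [e1]
      refine le_antisymm ?_ (measure_mono subset_union_left)
      calc κ (Iic r' ∪ Ioo r' r) ≤ κ (Iic r') + κ (Ioo r' r) := measure_union_le _ _
      _ = κ (Iic r') := by
          rw [le_antisymm ((hκ _).trans hIoo'.le) zero_le, add_zero]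
    rw [e κ₁ hk1, e κ₂ hk2, hIicr']
  rcases eq_or_lt_of_le hr'le with heq' | hlt'
  · have hr'E : r' ∉ E2 := fun h => absurd (heq' ▸ h.1) (lt_irrefl r)
    have := hIor' hr'E
    rwa [heq'] at this
  · by_cases hr'E : r' ∈ E2
    · exact hsplit2 hlt' (hIicE r' hr'E.2)
    · have hIor'' := hIor' hr'E
      have hr'atom : ρ {r'} = 0 := by
        by_contra hne
        have hmem : r' ∈ D := by
          refine atom_mem_D hD hne (fun h' heq => ?_)
          exact absurd (hrm h') (not_le.mpr (heq ▸ hlt'))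
        exact hr'E ⟨hlt', Or.inl hmem⟩
      have e : ∀ κ : Measure ℝ, (∀ s, κ s ≤ ρ s) → κ (Iic r') = κ (Iio r') := by
        intro κ hκ
        have e1 : Iic r' = Iio r' ∪ {r'} := by
          ext x
          simp only [mem_Iic, mem_union, mem_Iio, mem_singleton_iff]
          constructor
          · intro h; rcases lt_or_eq_of_le h with h | h
            exacts [Or.inl h, Or.inr h]
          · rintro (h | rfl) <;> [exact h.le; exact le_refl _]
        rw [e1]
        refine le_antisymm ?_ (measure_mono subset_union_left)
        calc κ (Iio r' ∪ {r'}) ≤ κ (Iio r') + κ {r'} := measure_union_le _ _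
        _ = κ (Iio r') := by
            rw [le_antisymm ((hκ _).trans hr'atom.le) zero_le, add_zero]
      refine hsplit2 hlt' ?_
      rw [e κ₁ hk1, e κ₂ hk2, hIor'']

end KeyLemma

/-- If `Y` is nondegenerate and `ν(Y,X) = 0`, then `Y` and `X` are independent. -/
theorem stmt_5 {Ω : Type*} [MeasurableSpace Ω] (μ : Measure Ω) [IsProbabilityMeasure μ]
    {p : ℕ} (Y : Ω → ℝ) (X : Ω → EuclideanSpace ℝ (Fin p))
    (hY : Measurable Y) (hX : Measurable X)
    (hconst : ¬ ∃ c : ℝ, ∀ᵐ ω ∂μ, Y ω = c)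
    (hnu : nu μ Y X = 0) :
    IndepFun Y X μ := by
  classical
  set ρ : Measure ℝ := Measure.map Y μ with hρdef
  haveI hρprob : IsProbabilityMeasure ρ := Measure.isProbabilityMeasure_map hY.aemeasurable
  have hmle : MeasurableSpace.comap X inferInstance ≤ ‹MeasurableSpace Ω› := hX.comap_le
  haveI : SigmaFinite (μ.trim hmle) := by infer_instance
  set W : ℝ → Ω → ℝ := fun t => μ[indGT Y t | MeasurableSpace.comap X inferInstance] with hWdef
  have hindmeas : ∀ t, Measurable (indGT Y t) := by
    intro t
    unfold indGT
    exact Measurable.ite (hY measurableSet_Ioi) measurable_const measurable_const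
  have hind01 : ∀ t ω, 0 ≤ indGT Y t ω ∧ indGT Y t ω ≤ 1 := by
    intro t ω; unfold indGT; split_ifs <;> norm_num
  have hindint : ∀ t, Integrable (indGT Y t) μ := by
    intro t
    refine Integrable.mono' (integrable_const 1) (hindmeas t).aestronglyMeasurable ?_
    exact Filter.Eventually.of_forall fun ω => by
      rw [Real.norm_eq_abs, abs_le]
      exact ⟨by linarith [(hind01 t ω).1], (hind01 t ω).2⟩
  have hindmem : ∀ t, MemLp (indGT Y t) 2 μ := fun t =>
    MemLp.of_bound (hindmeas t).aestronglyMeasurable 1 (Filter.Eventually.of_forall fun ω => by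
      rw [Real.norm_eq_abs, abs_le]
      exact ⟨by linarith [(hind01 t ω).1], (hind01 t ω).2⟩)
  have hindmono : ∀ a b : ℝ, a ≤ b → ∀ ω, indGT Y b ω ≤ indGT Y a ω := by
    intro a b hab ω
    unfold indGT
    split_ifs with h1 h2
    · exact le_refl _
    · exact absurd (lt_of_le_of_lt hab h1) h2
    · norm_num
    · exact le_refl _
  have hWmeas : ∀ t, Measurable (W t) := fun t => (stronglyMeasurable_condExp.mono hmle).measurable
  have hWint : ∀ t, Integrable (W t) μ := fun t => integrable_condExp
  have hW0 : ∀ t, 0 ≤ᵐ[μ] W t := fun t =>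
    condExp_nonneg (Filter.Eventually.of_forall fun ω => (hind01 t ω).1)
  have hW1 : ∀ t, W t ≤ᵐ[μ] fun _ => (1:ℝ) := by
    intro t
    have h := condExp_mono (m := MeasurableSpace.comap X inferInstance) (hindint t)
      (integrable_const 1) (Filter.Eventually.of_forall fun ω => (hind01 t ω).2)
    rwa [condExp_const hmle] at h
  have hWmem : ∀ t, MemLp (W t) 2 μ := by
    intro t
    refine MemLp.of_bound (hWmeas t).aestronglyMeasurable 1 ?_
    filter_upwards [hW0 t, hW1 t] with ω h0 h1
    have h0' : (0:ℝ) ≤ W t ω := h0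
    rw [Real.norm_eq_abs, abs_le]
    exact ⟨by linarith, h1⟩
  set pf : ℝ → ℝ := fun t => ∫ ω, indGT Y t ω ∂μ with hpfdef
  set qf : ℝ → ℝ := fun t => ∫ ω, (W t ω) ^ 2 ∂μ with hqfdef
  have hWpf : ∀ t, ∫ ω, W t ω ∂μ = pf t := fun t => integral_condExp hmle
  have hvar1 : ∀ t, variance (indGT Y t) μ = pf t - pf t ^ 2 := by
    intro t
    have e : ∫ x, ((indGT Y t) ^ 2) x ∂μ = pf t := by
      refine integral_congr_ae (Filter.Eventually.of_forall fun ω => ?_)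
      simp only [Pi.pow_apply]
      unfold indGT
      split_ifs <;> norm_num
    rw [variance_eq_sub (hindmem t), e]
  have hvar2 : ∀ t, variance (W t) μ = qf t - pf t ^ 2 := by
    intro t
    rw [variance_eq_sub (hWmem t), hWpf t]
    congr 1
  have hpf01 : ∀ t, 0 ≤ pf t ∧ pf t ≤ 1 := by
    intro t
    constructor
    · exact integral_nonneg fun ω => (hind01 t ω).1
    · calc pf t ≤ ∫ _ω, (1:ℝ) ∂μ :=
          integral_mono (hindint t) (integrable_const 1) (fun ω => (hind01 t ω).2)
      _ = 1 := by simp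
  have hqf_le : ∀ t, qf t ≤ pf t := by
    intro t
    have h := integral_mono_ae ((hWmem t).integrable_sq) (hWint t) (by
      filter_upwards [hW0 t, hW1 t] with ω h0 h1
      have h0' : (0:ℝ) ≤ W t ω := h0
      nlinarith : (fun ω => W t ω ^ 2) ≤ᵐ[μ] W t)
    rw [hWpf t] at h
    exact h
  have hqf_ge : ∀ t, pf t ^ 2 ≤ qf t := by
    intro t
    have h := variance_nonneg (W t) μ
    rw [hvar2 t] at h
    linarith
  have hpanti : Antitone pf := by
    intro a b hab
    exact integral_mono (hindint b) (hindint a) (hindmono a b hab)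
  have hqanti : Antitone qf := by
    intro a b hab
    refine integral_mono_ae ((hWmem b).integrable_sq) ((hWmem a).integrable_sq) ?_
    have hle := condExp_mono (m := MeasurableSpace.comap X inferInstance) (hindint b) (hindint a)
      (Filter.Eventually.of_forall (hindmono a b hab))
    filter_upwards [hle, hW0 b] with ω h1 h0
    have h0' : (0:ℝ) ≤ W b ω := h0
    exact pow_le_pow_left₀ h0' h1 2
  have hpmeas : Measurable pf := hpanti.measurable
  have hqmeas : Measurable qf := hqanti.measurable
  set g : ℝ → ℝ := fun t => if pf t - pf t ^ 2 = 0 then 1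
      else (qf t - pf t ^ 2) / (pf t - pf t ^ 2) with hgdef
  have hg01 : ∀ t, 0 ≤ g t ∧ g t ≤ 1 := by
    intro t
    rw [hgdef]
    simp only
    split_ifs with h
    · norm_num
    · have hv0 : 0 ≤ pf t - pf t ^ 2 := by nlinarith [(hpf01 t).1, (hpf01 t).2]
      have hv : 0 < pf t - pf t ^ 2 := lt_of_le_of_ne hv0 (Ne.symm h)
      constructor
      · exact div_nonneg (by linarith [hqf_ge t]) hv0
      · rw [div_le_one hv]; linarith [hqf_le t]
  have hgmeas : Measurable g := by
    refine Measurable.ite ?_ measurable_const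
      ((hqmeas.sub (hpmeas.pow_const 2)).div (hpmeas.sub (hpmeas.pow_const 2)))
    exact (hpmeas.sub (hpmeas.pow_const 2)) (measurableSet_singleton 0)
  have hnu' : ∫ t, g t ∂ (tildeMeasure ρ) = 0 := by
    rw [← hnu]
    unfold nu
    refine integral_congr_ae (Filter.Eventually.of_forall fun t => ?_)
    show g t = if variance (indGT Y t) μ = 0 then 1
        else variance (W t) μ / variance (indGT Y t) μ
    rw [hvar1 t, hvar2 t, hgdef]
  have hcne : ρ (tildeSet ρ) ≠ ⊤ := measure_ne_top ρ _
  have hc0 : ρ (tildeSet ρ) ≠ 0 := by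
    intro h0
    apply hconst
    by_cases hgr : ∃ m, IsGreatest (msupport ρ) m
    · refine ⟨hgr.choose, ?_⟩
      have h1 : ρ {hgr.choose}ᶜ = 0 := by
        have hsub : ({hgr.choose}ᶜ : Set ℝ) ⊆ (msupport ρ \ {hgr.choose}) ∪ (msupport ρ)ᶜ := by
          intro x hx
          by_cases hxS : x ∈ msupport ρ
          exacts [Or.inl ⟨hxS, hx⟩, Or.inr hxS]
        have hSt0 : ρ (msupport ρ \ {hgr.choose}) = 0 := by
          unfold tildeSet at h0
          rwa [dif_pos hgr] at h0
        exact measure_mono_null hsub (measure_union_null hSt0 (measure_compl_msupport ρ))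
      replace h1 : Measure.map Y μ {hgr.choose}ᶜ = 0 := h1
      rw [Measure.map_apply hY (measurableSet_singleton _).compl] at h1
      refine ae_iff.mpr ?_
      convert h1 using 2
      rfl
    · exfalso
      have hSt0 : ρ (msupport ρ) = 0 := by
        unfold tildeSet at h0
        rwa [dif_neg hgr] at h0
      have huniv0 : ρ univ = 0 := by
        rw [← union_compl_self (msupport ρ)]
        exact measure_union_null hSt0 (measure_compl_msupport ρ)
      rw [measure_univ] at huniv0
      exact one_ne_zero huniv0
  have hcR : ((ρ (tildeSet ρ))⁻¹).toReal ≠ 0 := by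
    rw [ENNReal.toReal_inv]
    exact inv_ne_zero (ENNReal.toReal_ne_zero.mpr ⟨hc0, hcne⟩)
  have hint0 : ∫ t, g t ∂ (ρ.restrict (tildeSet ρ)) = 0 := by
    have h := hnu'
    unfold tildeMeasure at h
    rw [integral_smul_measure, smul_eq_mul] at h
    rcases mul_eq_zero.mp h with h' | h'
    · exact absurd h' hcR
    · exact h'
  have hgint : Integrable g (ρ.restrict (tildeSet ρ)) := by
    refine Integrable.mono' (integrable_const 1) hgmeas.aestronglyMeasurable ?_
    exact Filter.Eventually.of_forall fun t => by
      rw [Real.norm_eq_abs, abs_le]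
      exact ⟨by linarith [(hg01 t).1], (hg01 t).2⟩
  have hg0ae : g =ᵐ[ρ.restrict (tildeSet ρ)] 0 :=
    (integral_eq_zero_iff_of_nonneg (fun t => (hg01 t).1) hgint).mp hint0
  have haeInd : ∀ᵐ t ∂ρ.restrict (tildeSet ρ),
      ∀ B : Set (EuclideanSpace ℝ (Fin p)), MeasurableSet B →
        μ (Y ⁻¹' Set.Ioi t ∩ X ⁻¹' B) = μ (Y ⁻¹' Set.Ioi t) * μ (X ⁻¹' B) := by
    filter_upwards [hg0ae] with t hgt
    have hgt' : g t = 0 := hgt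
    have hv : pf t - pf t ^ 2 ≠ 0 ∧ qf t - pf t ^ 2 = 0 := by
      by_cases h : pf t - pf t ^ 2 = 0
      · exfalso
        rw [hgdef] at hgt'
        simp only at hgt'
        rw [if_pos h] at hgt'
        norm_num at hgt'
      · refine ⟨h, ?_⟩
        rw [hgdef] at hgt'
        simp only at hgt'
        rw [if_neg h] at hgt'
        exact (div_eq_zero_iff.mp hgt').resolve_right h
    have hvarW : variance (W t) μ = 0 := by rw [hvar2 t]; exact hv.2
    have hWae : W t =ᵐ[μ] fun _ => pf t := by
      have hlt := (hWmem t).evariance_lt_top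
      have hv0 : (evariance (W t) μ).toReal = 0 := hvarW
      have hev : evariance (W t) μ = 0 := by
        rcases ENNReal.toReal_eq_zero_iff _ |>.mp hv0 with h | h
        · exact h
        · exact absurd h hlt.ne
      have h := (evariance_eq_zero_iff ((hWmeas t).aemeasurable)).mp hev
      rwa [hWpf t] at h
    intro B hB
    have hA : MeasurableSet (X ⁻¹' B) := hX hB
    have hAm : MeasurableSet[MeasurableSpace.comap X inferInstance] (X ⁻¹' B) := ⟨B, hB, rfl⟩
    have e : indGT Y t = (Y ⁻¹' Set.Ioi t).indicator (fun _ => (1:ℝ)) := by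
      funext ω
      unfold indGT
      by_cases h : Y ω > t
      · rw [if_pos h]
        exact (Set.indicator_of_mem (show ω ∈ Y ⁻¹' Set.Ioi t from h) (fun _ => (1:ℝ))).symm
      · rw [if_neg h]
        exact (Set.indicator_of_notMem (show ω ∉ Y ⁻¹' Set.Ioi t from h) (fun _ => (1:ℝ))).symm
    have h1 : ∫ ω in X ⁻¹' B, indGT Y t ω ∂μ = ∫ ω in X ⁻¹' B, W t ω ∂μ :=
      (setIntegral_condExp hmle (hindint t) hAm).symm
    have h2 : ∫ ω in X ⁻¹' B, W t ω ∂μ = pf t * (μ (X ⁻¹' B)).toReal := by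
      rw [setIntegral_congr_ae hA (by filter_upwards [hWae] with ω hω _; exact hω),
        setIntegral_const, smul_eq_mul, mul_comm, measureReal_def]
    have h3 : ∫ ω in X ⁻¹' B, indGT Y t ω ∂μ = (μ (Y ⁻¹' Set.Ioi t ∩ X ⁻¹' B)).toReal := by
      rw [e, setIntegral_indicator (hY measurableSet_Ioi), setIntegral_const, smul_eq_mul,
        mul_one, inter_comm, measureReal_def]
    have hpt : pf t = (μ (Y ⁻¹' Set.Ioi t)).toReal := by
      rw [hpfdef]
      simp only
      rw [e, integral_indicator_const (1:ℝ) (hY measurableSet_Ioi), smul_eq_mul, mul_one, measureReal_def]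
    have hreal : (μ (Y ⁻¹' Set.Ioi t ∩ X ⁻¹' B)).toReal
        = (μ (Y ⁻¹' Set.Ioi t)).toReal * (μ (X ⁻¹' B)).toReal := by
      rw [← h3, h1, h2, hpt]
    apply (ENNReal.toReal_eq_toReal_iff' (measure_ne_top μ _)
      (ENNReal.mul_ne_top (measure_ne_top μ _) (measure_ne_top μ _))).mp
    rw [ENNReal.toReal_mul]
    exact hreal
  rw [ProbabilityTheory.indepFun_iff_measure_inter_preimage_eq_mul]
  intro s B hs hB
  set κ₁ : Measure ℝ := Measure.map Y (μ.restrict (X ⁻¹' B)) with hκ₁def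
  set κ₂ : Measure ℝ := μ (X ⁻¹' B) • ρ with hκ₂def
  haveI hκ₁fin : IsFiniteMeasure κ₁ := by
    constructor
    rw [hκ₁def, Measure.map_apply hY MeasurableSet.univ]
    exact measure_lt_top _ _
  haveI hκ₂fin : IsFiniteMeasure κ₂ := by
    constructor
    rw [hκ₂def, Measure.smul_apply, smul_eq_mul]
    exact ENNReal.mul_lt_top (measure_lt_top _ _) (measure_lt_top _ _)
  have hle1 : κ₁ ≤ ρ := by
    refine Measure.le_iff.mpr fun s' hs' => ?_
    rw [hκ₁def, Measure.map_apply hY hs', Measure.restrict_apply (hY hs'), hρdef,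
      Measure.map_apply hY hs']
    exact measure_mono inter_subset_left
  have hle2 : κ₂ ≤ ρ := by
    refine Measure.le_iff.mpr fun s' hs' => ?_
    rw [hκ₂def, Measure.smul_apply, smul_eq_mul]
    calc μ (X ⁻¹' B) * ρ s' ≤ 1 * ρ s' := mul_le_mul_left prob_le_one _
    _ = ρ s' := one_mul _
  have huniv : κ₁ univ = κ₂ univ := by
    rw [hκ₁def, hκ₂def, Measure.map_apply hY MeasurableSet.univ, Set.preimage_univ,
      Measure.restrict_apply MeasurableSet.univ, Set.univ_inter, Measure.smul_apply,
      smul_eq_mul, measure_univ, mul_one]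
  have haeB : ∀ᵐ t ∂ρ.restrict (tildeSet ρ), κ₁ (Set.Ioi t) = κ₂ (Set.Ioi t) := by
    filter_upwards [haeInd] with t ht
    rw [hκ₁def, hκ₂def, Measure.map_apply hY measurableSet_Ioi,
      Measure.restrict_apply (hY measurableSet_Ioi), Measure.smul_apply, smul_eq_mul,
      hρdef, Measure.map_apply hY measurableSet_Ioi, ht B hB, mul_comm]
  have hall := key_extension ρ κ₁ κ₂ hle1 hle2 huniv haeB
  have hκeq : κ₁ = κ₂ := by
    refine MeasureTheory.ext_of_generate_finite (Set.range Set.Ioi) ?_ isPiSystem_Ioi ?_ huniv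
    · rw [BorelSpace.measurable_eq (α := ℝ), borel_eq_generateFrom_Ioi]
    · rintro s' ⟨a, rfl⟩
      exact hall a
  have hfinal : κ₁ s = κ₂ s := by rw [hκeq]
  rw [hκ₁def, Measure.map_apply hY hs, Measure.restrict_apply (hY hs), hκ₂def,
    Measure.smul_apply, smul_eq_mul, hρdef, Measure.map_apply hY hs] at hfinal
  rw [hfinal, mul_comm]
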